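/- Let V be a rank one valuation domain, α ∈ K, γ ∈ ℝ. Then V[(X-α)/γ] := {Σ_k a_k(X-α)^k ∈ K[X] : v(a_k) + kγ ≥ 0 for all k} is contained in Int(B(α,γ), V). Moreover, if S ⊆ V satisfies Int(S, V) ⊆ V_{α,γ}, then the closed ball B(α, γ) is contained in the polynomial closure of S. -/

import Mathlib

open Polynomial

/-- The valuation `v_{α,γ}` on polynomials: writing `f = Σ aᵢ (X - α)^i`,
`v_{α,γ} f = min_i (v aᵢ + i·γ)`; the ring `V[(X-α)/γ] = V_{α,γ} ∩ K[X]` is the set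
of polynomials with `0 ≤ v_{α,γ} f`. -/
noncomputable def vAlphaGamma {K : Type*} [Field K] (v : AddValuation K (WithTop ℝ))
    (α : K) (γ : ℝ) (f : Polynomial K) : WithTop ℝ :=
  (f.comp (X + C α)).support.inf
    (fun i => v ((f.comp (X + C α)).coeff i) + (((i : ℝ) * γ : ℝ) : WithTop ℝ))

theorem stmt15_aux {K : Type*} [Field K] (v : AddValuation K (WithTop ℝ))
    (α : K) (γ : ℝ) (f : Polynomial K) (hf : 0 ≤ vAlphaGamma v α γ f)
    (x : K) (hx : (γ : WithTop ℝ) ≤ v (x - α)) : 0 ≤ v (f.eval x) := by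
  set g := f.comp (X + C α) with hg
  have hev : f.eval x = g.eval (x - α) := by
    simp [hg, eval_comp]
  rw [hev]
  rw [eval_eq_sum, Polynomial.sum]
  apply v.map_le_sum
  intro i hi
  rw [v.map_mul, v.map_pow]
  have h1 : (0 : WithTop ℝ) ≤ v (g.coeff i) + ((i : ℝ) * γ : ℝ) := by
    refine le_trans hf ?_
    exact Finset.inf_le hi
  have h2 : (((i : ℝ) * γ : ℝ) : WithTop ℝ) ≤ i • v (x - α) := by
    calc (((i : ℝ) * γ : ℝ) : WithTop ℝ) = i • ((γ : ℝ) : WithTop ℝ) := by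
          rw [← WithTop.coe_nsmul, nsmul_eq_mul]
      _ ≤ i • v (x - α) := nsmul_le_nsmul_right hx i
  calc (0 : WithTop ℝ) ≤ v (g.coeff i) + ((i : ℝ) * γ : ℝ) := h1
    _ ≤ v (g.coeff i) + i • v (x - α) := add_le_add_right h2 _

/-- For a rank-one valuation domain `V`, `α ∈ K`, `γ ∈ ℝ`:
`V[(X-α)/γ] ⊆ Int(B(α,γ), V)`; and if `S ⊆ V` satisfies `Int(S,V) ⊆ V_{α,γ}`,
then `B(α,γ)` is contained in the polynomial closure of `S`. -/
theorem stmt15 {K : Type*} [Field K] (v : AddValuation K (WithTop ℝ))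
    (hrank : ∃ π : K, 0 < v π ∧ v π ≠ ⊤) (α : K) (γ : ℝ) :
    (∀ f : Polynomial K, 0 ≤ vAlphaGamma v α γ f →
      ∀ x : K, (γ : WithTop ℝ) ≤ v (x - α) → 0 ≤ v (f.eval x)) ∧
    (∀ S : Set K, (∀ s ∈ S, 0 ≤ v s) →
      (∀ f : Polynomial K, (∀ s ∈ S, 0 ≤ v (f.eval s)) → 0 ≤ vAlphaGamma v α γ f) →
      ∀ x : K, (γ : WithTop ℝ) ≤ v (x - α) →
        ∀ f : Polynomial K, (∀ s ∈ S, 0 ≤ v (f.eval s)) → 0 ≤ v (f.eval x)) := by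
  constructor
  · exact fun f hf x hx => stmt15_aux v α γ f hf x hx
  · intro S _ hInt x hx f hf
    exact stmt15_aux v α γ f (hInt f hf) x hx
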